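/- Suppose ξ = Ũ_0 + Σ_{k=0}^{N−1} H^F_k·ΔM_k + Õ_N P-a.s., where Ũ_0 is square-integrable and F_0-measurable, each H^F_k is F_k-measurable, square-integrable, with H^F_k·ΔM_k square-integrable, and Õ_N is square-integrable with E[Õ_N·(V_0 + Σ_{k=0}^{N−1} φ_k·ΔM_k)] = 0 for every square-integrable F_0-measurable V_0 and every process φ with φ_k F_k-measurable and φ_k·ΔM_k square-integrable. Assume moreover that for every k the conditional variance w_k := E[(ΔM_k)² | F_k] is (a.e. equal to) an H_k-measurable function. Then, setting U_0 := E[Ũ_0 | H_0] and H^H_k := E[H^F_k | H_k], each H^H_k·ΔM_k is square-integrable and the random variable ξ − U_0 − Σ_{k=0}^{N−1} H^H_k·ΔM_k is orthogonal in L²(P) to every element of L^H. -/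

import Mathlib

open MeasureTheory
section
variable {Ω : Type*} {mΩ : MeasurableSpace Ω} {P : Measure Ω} [IsProbabilityMeasure P]

private lemma aux_int_mul_L2 {f g : Ω → ℝ} (hf : MemLp f 2 P) (hg : MemLp g 2 P) :
    Integrable (fun ω => f ω * g ω) P := by
  have h : MemLp (f • g) 1 P := hg.smul hf
  rw [memLp_one_iff_integrable] at h
  exact h

private lemma aux_memL2_condExp {m : MeasurableSpace Ω} (hm : m ≤ mΩ) {f : Ω → ℝ}
    (hf : MemLp f 2 P) : MemLp (P[f|m]) 2 P := by
  have hfi : Integrable f P := hf.integrable one_le_two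
  set cL : @lpMeas Ω ℝ ℝ _ _ _ m mΩ 2 P := condExpL2 ℝ ℝ hm (hf.toLp f) with hcL
  have hint : Integrable (((cL : Lp ℝ 2 P) : Ω → ℝ)) P :=
    integrable_condExpL2_of_isFiniteMeasure (𝕜 := ℝ) hm
  have hio : ∀ s : Set Ω, MeasurableSet[m] s → P s < ⊤ →
      Integrable (((cL : Lp ℝ 2 P) : Ω → ℝ)) (P.restrict s) := fun s _ _ => hint.restrict
  have heq : ∀ s : Set Ω, MeasurableSet[m] s → P s < ⊤ →
      ∫ x in s, ((cL : Lp ℝ 2 P) : Ω → ℝ) x ∂P = ∫ x in s, f x ∂P := by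
    intro s hs hμs
    have h1 := integral_condExpL2_eq (𝕜 := ℝ) hm (hf.toLp f) hs hμs.ne
    have h2 : ∫ x in s, (hf.toLp f : Ω → ℝ) x ∂P = ∫ x in s, f x ∂P :=
      integral_congr_ae (ae_restrict_of_ae hf.coeFn_toLp)
    rw [hcL]
    exact h1.trans h2
  have hceq : ((cL : Lp ℝ 2 P) : Ω → ℝ) =ᵐ[P] P[f|m] :=
    ae_eq_condExp_of_forall_setIntegral_eq hm hfi hio heq
      (aestronglyMeasurable_condExpL2 hm _)
  exact (Lp.memLp (cL : Lp ℝ 2 P)).ae_eq hceq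

private lemma aux_part1 {m𝔽 mℍ : MeasurableSpace Ω} (hℍ𝔽 : mℍ ≤ m𝔽) (h𝔽 : m𝔽 ≤ mΩ)
    {HFk d w : Ω → ℝ} (hHFm : StronglyMeasurable[m𝔽] HFk) (hHF2 : MemLp HFk 2 P)
    (hd2 : MemLp d 2 P) (hHFd2 : MemLp (fun ω => HFk ω * d ω) 2 P)
    (hwm : StronglyMeasurable[mℍ] w) (hwae : P[fun ω => d ω ^ 2|m𝔽] =ᵐ[P] w) :
    MemLp (fun ω => (P[HFk|mℍ]) ω * d ω) 2 P := by
  have hℍ : mℍ ≤ mΩ := hℍ𝔽.trans h𝔽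
  set HH := P[HFk|mℍ] with hHHdef
  have hHHm : StronglyMeasurable[mℍ] HH := stronglyMeasurable_condExp
  have hHH2 : MemLp HH 2 P := aux_memL2_condExp hℍ hHF2
  have hD2int : Integrable (fun ω => d ω ^ 2) P := hd2.integrable_sq
  have hwint : Integrable w P := integrable_condExp.congr hwae
  have hw0 : ∀ᵐ ω ∂P, 0 ≤ w ω := by
    have h0 : (0 : Ω → ℝ) ≤ᵐ[P] P[fun ω => d ω ^ 2|m𝔽] :=
      condExp_nonneg (Filter.Eventually.of_forall fun ω => sq_nonneg _)
    filter_upwards [h0, hwae] with ω h1 h2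
    rw [← h2]; exact h1
  -- conditional Jensen
  have hHFsqint : Integrable (fun ω => HFk ω * HFk ω) P := aux_int_mul_L2 hHF2 hHF2
  have hHHsqint : Integrable (fun ω => HH ω * HH ω) P := aux_int_mul_L2 hHH2 hHH2
  have hf2int : Integrable (fun ω => 2 * HH ω * HFk ω) P := by
    have h := (aux_int_mul_L2 hHH2 hHF2).const_mul 2
    exact h.congr (Filter.Eventually.of_forall fun ω => by ring)
  have hsumint : Integrable (fun ω => HFk ω * HFk ω + HH ω * HH ω) P :=
    hHFsqint.add hHHsqint
  have hqnn : (0 : Ω → ℝ) ≤ᵐ[P] P[fun ω => (HFk ω - HH ω) * (HFk ω - HH ω)|mℍ] :=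
    condExp_nonneg (Filter.Eventually.of_forall fun ω => mul_self_nonneg _)
  have hexp : P[fun ω => (HFk ω - HH ω) * (HFk ω - HH ω)|mℍ]
      =ᵐ[P] fun ω => (P[fun ω => HFk ω * HFk ω|mℍ]) ω - HH ω * HH ω := by
    have heqfun : (fun ω => (HFk ω - HH ω) * (HFk ω - HH ω))
        = fun ω => (HFk ω * HFk ω + HH ω * HH ω) - 2 * HH ω * HFk ω := by
      funext ω; ring
    rw [heqfun]
    have h1 := condExp_sub (μ := P) (m := mℍ) hsumint hf2int
    have h2 := condExp_add (μ := P) (m := mℍ) hHFsqint hHHsqint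
    have h3 : P[fun ω => HH ω * HH ω|mℍ] = fun ω => HH ω * HH ω :=
      condExp_of_stronglyMeasurable hℍ (hHHm.mul hHHm) hHHsqint
    have h4 : P[fun ω => 2 * HH ω * HFk ω|mℍ]
        =ᵐ[P] (fun ω => 2 * HH ω) * P[HFk|mℍ] :=
      condExp_mul_of_stronglyMeasurable_left (hHHm.const_mul 2)
        (hf2int.congr (Filter.Eventually.of_forall fun ω => by
          simp only [Pi.mul_apply]))
        (hHF2.integrable one_le_two)
    filter_upwards [h1, h2, h4] with ω e1 e2 e4
    refine e1.trans ?_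
    have e2' : (P[fun ω => HFk ω * HFk ω + HH ω * HH ω|mℍ]) ω
        = (P[fun ω => HFk ω * HFk ω|mℍ]) ω + HH ω * HH ω := by
      refine e2.trans ?_
      simp only [Pi.add_apply, h3]
    have e4' : (P[fun ω => 2 * HH ω * HFk ω|mℍ]) ω = 2 * HH ω * HH ω := by
      refine e4.trans ?_
      simp only [Pi.mul_apply, ← hHHdef]
    simp only [Pi.sub_apply]
    rw [e2', e4']
    ring
  have hJ : ∀ᵐ ω ∂P, HH ω * HH ω ≤ (P[fun ω => HFk ω * HFk ω|mℍ]) ω := by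
    filter_upwards [hqnn, hexp] with ω h1 h2
    have h3 := h1.trans_eq h2
    simp only [Pi.zero_apply] at h3
    linarith
  -- Integrability of HFk² ⬝ w and of w ⬝ g with g := P[HFk²|mℍ]
  have hHFd2sq : Integrable (fun ω => HFk ω * HFk ω * d ω ^ 2) P := by
    have h := hHFd2.integrable_sq
    exact h.congr (Filter.Eventually.of_forall fun ω => by ring)
  have hp1 : P[fun ω => HFk ω * HFk ω * d ω ^ 2|m𝔽] =ᵐ[P] fun ω => HFk ω * HFk ω * w ω := by
    have h := condExp_mul_of_stronglyMeasurable_left (m := m𝔽) (hHFm.mul hHFm)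
      (hHFd2sq.congr (Filter.Eventually.of_forall fun ω => by
        simp only [Pi.mul_apply])) hD2int
    have h' : P[fun ω => HFk ω * HFk ω * d ω ^ 2|m𝔽]
        =ᵐ[P] (HFk * HFk) * P[fun ω => d ω ^ 2|m𝔽] := by
      refine Filter.EventuallyEq.trans ?_ h
      refine condExp_congr_ae (Filter.Eventually.of_forall fun ω => ?_)
      simp only [Pi.mul_apply]
    filter_upwards [h', hwae] with ω h1 h2
    refine h1.trans ?_
    simp only [Pi.mul_apply]
    rw [h2]
  have hHFwint : Integrable (fun ω => HFk ω * HFk ω * w ω) P := integrable_condExp.congr hp1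
  have hp2 : P[fun ω => w ω * (HFk ω * HFk ω)|mℍ]
      =ᵐ[P] fun ω => w ω * (P[fun ω => HFk ω * HFk ω|mℍ]) ω := by
    have h := condExp_mul_of_stronglyMeasurable_left (m := mℍ) hwm
      (hHFwint.congr (Filter.Eventually.of_forall (fun ω => by
        simp only [Pi.mul_apply]; ring))) hHFsqint
    have h' : P[fun ω => w ω * (HFk ω * HFk ω)|mℍ]
        =ᵐ[P] w * P[fun ω => HFk ω * HFk ω|mℍ] := by
      refine Filter.EventuallyEq.trans ?_ h
      refine condExp_congr_ae (Filter.Eventually.of_forall fun ω => ?_)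
      simp only [Pi.mul_apply]
    filter_upwards [h'] with ω h1
    exact h1.trans (by simp only [Pi.mul_apply])
  have hgwint : Integrable (fun ω => w ω * (P[fun ω => HFk ω * HFk ω|mℍ]) ω) P :=
    integrable_condExp.congr hp2
  set C : ℝ := ∫ ω, w ω * (P[fun ω => HFk ω * HFk ω|mℍ]) ω ∂P with hC
  -- truncation
  have key : ∀ n : ℕ, ∫⁻ ω, ENNReal.ofReal (min (HH ω * HH ω) n * d ω ^ 2) ∂P
      ≤ ENNReal.ofReal C := by
    intro n
    have hnm : StronglyMeasurable[mℍ] (fun ω => min (HH ω * HH ω) (n : ℝ)) :=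
      ((hHHm.measurable.mul hHHm.measurable).min measurable_const).stronglyMeasurable
    have hn0 : ∀ ω, 0 ≤ min (HH ω * HH ω) (n : ℝ) :=
      fun ω => le_min (mul_self_nonneg _) (Nat.cast_nonneg n)
    have hnbd : ∃ c : ℝ, ∀ ω, ‖min (HH ω * HH ω) (n : ℝ)‖ ≤ c :=
      ⟨n, fun ω => by
        rw [Real.norm_eq_abs, abs_of_nonneg (hn0 ω)]
        exact min_le_right _ _⟩
    have hnd2int : Integrable (fun ω => min (HH ω * HH ω) (n : ℝ) * d ω ^ 2) P :=
      hD2int.bdd_mul ((hnm.mono hℍ).aestronglyMeasurable) (Filter.Eventually.of_forall hnbd.choose_spec)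
    have hpull := condExp_mul_of_stronglyMeasurable_left (m := m𝔽) (hnm.mono hℍ𝔽)
      (hnd2int.congr (Filter.Eventually.of_forall fun ω => by simp only [Pi.mul_apply]))
      hD2int
    have hint1 : ∫ ω, min (HH ω * HH ω) (n : ℝ) * d ω ^ 2 ∂P
        = ∫ ω, min (HH ω * HH ω) (n : ℝ) * w ω ∂P := by
      rw [← integral_condExp h𝔽 (f := fun ω => min (HH ω * HH ω) (n : ℝ) * d ω ^ 2)]
      refine integral_congr_ae ?_
      have hpull' : P[fun ω => min (HH ω * HH ω) (n : ℝ) * d ω ^ 2|m𝔽]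
          =ᵐ[P] (fun ω => min (HH ω * HH ω) (n : ℝ)) * P[fun ω => d ω ^ 2|m𝔽] := by
        refine Filter.EventuallyEq.trans ?_ hpull
        refine condExp_congr_ae (Filter.Eventually.of_forall fun ω => ?_)
        simp only [Pi.mul_apply]
      filter_upwards [hpull', hwae] with ω h1 h2
      refine h1.trans ?_
      simp only [Pi.mul_apply]
      rw [h2]
    have hnwint : Integrable (fun ω => min (HH ω * HH ω) (n : ℝ) * w ω) P :=
      hwint.bdd_mul ((hnm.mono hℍ).aestronglyMeasurable) (Filter.Eventually.of_forall hnbd.choose_spec)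
    have hle2 : ∫ ω, min (HH ω * HH ω) (n : ℝ) * w ω ∂P ≤ C := by
      rw [hC]
      refine integral_mono_ae hnwint hgwint ?_
      filter_upwards [hJ, hw0] with ω h1 h2
      calc min (HH ω * HH ω) (n : ℝ) * w ω ≤ (P[fun ω => HFk ω * HFk ω|mℍ]) ω * w ω := by
            exact mul_le_mul_of_nonneg_right ((min_le_left _ _).trans h1) h2
        _ = w ω * (P[fun ω => HFk ω * HFk ω|mℍ]) ω := by ring
    calc ∫⁻ ω, ENNReal.ofReal (min (HH ω * HH ω) n * d ω ^ 2) ∂P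
        = ENNReal.ofReal (∫ ω, min (HH ω * HH ω) (n : ℝ) * d ω ^ 2 ∂P) :=
          (ofReal_integral_eq_lintegral_ofReal hnd2int
            (Filter.Eventually.of_forall fun ω => mul_nonneg (hn0 ω) (sq_nonneg _))).symm
      _ ≤ ENNReal.ofReal C := ENNReal.ofReal_le_ofReal (hint1 ▸ hle2)
  have hfin : ∫⁻ ω, ENNReal.ofReal (HH ω * HH ω * d ω ^ 2) ∂P ≤ ENNReal.ofReal C := by
    have hsup : ∀ ω, (⨆ n : ℕ, ENNReal.ofReal (min (HH ω * HH ω) (n : ℝ) * d ω ^ 2))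
        = ENNReal.ofReal (HH ω * HH ω * d ω ^ 2) := by
      intro ω
      apply le_antisymm
      · exact iSup_le fun n => ENNReal.ofReal_le_ofReal
          (mul_le_mul_of_nonneg_right (min_le_left _ _) (sq_nonneg _))
      · refine le_iSup_of_le ⌈HH ω * HH ω⌉₊ (le_of_eq ?_)
        rw [min_eq_left (Nat.le_ceil _)]
    have haem : ∀ n : ℕ,
        AEMeasurable (fun ω => ENNReal.ofReal (min (HH ω * HH ω) (n : ℝ) * d ω ^ 2)) P := by
      intro n
      refine ENNReal.measurable_ofReal.comp_aemeasurable ?_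
      exact (((((hHHm.mono hℍ).measurable.mul (hHHm.mono hℍ).measurable).min
        measurable_const)).aemeasurable.mul
        ((hd2.aestronglyMeasurable.aemeasurable).pow aemeasurable_const))
    have hmono : ∀ᵐ ω ∂P, Monotone fun n : ℕ =>
        ENNReal.ofReal (min (HH ω * HH ω) (n : ℝ) * d ω ^ 2) := by
      refine Filter.Eventually.of_forall fun ω => ?_
      intro a b hab
      exact ENNReal.ofReal_le_ofReal (mul_le_mul_of_nonneg_right
        (min_le_min le_rfl (Nat.cast_le.mpr hab)) (sq_nonneg _))
    calc ∫⁻ ω, ENNReal.ofReal (HH ω * HH ω * d ω ^ 2) ∂P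
        = ∫⁻ ω, ⨆ n : ℕ, ENNReal.ofReal (min (HH ω * HH ω) (n : ℝ) * d ω ^ 2) ∂P :=
          lintegral_congr fun ω => (hsup ω).symm
      _ = ⨆ n : ℕ, ∫⁻ ω, ENNReal.ofReal (min (HH ω * HH ω) (n : ℝ) * d ω ^ 2) ∂P :=
          lintegral_iSup' haem hmono
      _ ≤ ENNReal.ofReal C := iSup_le key
  -- conclude
  have haesm : AEStronglyMeasurable[mΩ] (fun ω => HH ω * d ω) P :=
    ((hHHm.mono hℍ).aestronglyMeasurable).mul hd2.aestronglyMeasurable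
  refine (memLp_two_iff_integrable_sq haesm).mpr ?_
  have e : (fun ω => (HH ω * d ω) ^ 2) = fun ω => HH ω * HH ω * d ω ^ 2 := by
    funext ω; ring
  rw [e]
  refine ⟨((hHHm.mono hℍ).aestronglyMeasurable.mul
    (hHHm.mono hℍ).aestronglyMeasurable).mul
    (hd2.aestronglyMeasurable.pow 2), ?_⟩
  rw [hasFiniteIntegral_iff_norm]
  calc ∫⁻ ω, ENNReal.ofReal ‖HH ω * HH ω * d ω ^ 2‖ ∂P
      = ∫⁻ ω, ENNReal.ofReal (HH ω * HH ω * d ω ^ 2) ∂P := by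
        refine lintegral_congr fun ω => ?_
        rw [Real.norm_eq_abs, abs_of_nonneg (mul_nonneg (mul_self_nonneg _) (sq_nonneg _))]
    _ ≤ ENNReal.ofReal C := hfin
    _ < ⊤ := ENNReal.ofReal_lt_top


private lemma aux_pullout_zero {m : MeasurableSpace Ω} (hm : m ≤ mΩ) {f g : Ω → ℝ}
    (hf : StronglyMeasurable[m] f) (hg : Integrable g P)
    (hfg : Integrable (fun ω => f ω * g ω) P) (hz : P[g|m] =ᵐ[P] 0) :
    ∫ ω, f ω * g ω ∂P = 0 := by
  have h1 : P[fun ω => f ω * g ω|m] =ᵐ[P] f * P[g|m] :=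
    condExp_mul_of_stronglyMeasurable_left hf hfg hg
  have h2 : P[fun ω => f ω * g ω|m] =ᵐ[P] (fun _ => (0:ℝ)) := by
    filter_upwards [h1, hz] with ω hω hzω
    rw [hω, Pi.mul_apply, hzω, Pi.zero_apply, mul_zero]
  calc ∫ ω, f ω * g ω ∂P = ∫ ω, (P[fun ω => f ω * g ω|m]) ω ∂P := (integral_condExp hm).symm
    _ = 0 := by rw [integral_congr_ae h2, integral_const]; simp

private lemma aux_condExp_diff_zero {m : MeasurableSpace Ω} (hm : m ≤ mΩ) {f : Ω → ℝ}
    (hf : Integrable f P) :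
    P[fun ω => f ω - (P[f|m]) ω|m] =ᵐ[P] 0 := by
  have h := condExp_sub (μ := P) (m := m) hf (integrable_condExp (f := f) (m := m))
  have h2 : P[P[f|m]|m] = P[f|m] :=
    condExp_of_stronglyMeasurable hm stronglyMeasurable_condExp integrable_condExp
  filter_upwards [h] with ω hω
  refine hω.trans ?_
  simp [Pi.sub_apply, h2]

end

open MeasureTheory

/-- Discrete form of the paper's Proposition 4.1: if `ξ = Utilde + Σ H^F_k ΔM_k + Õ_N` is the
full-information Galtchouk–Kunita–Watanabe decomposition and the conditional variances
`w_k = E[(ΔM_k)²|𝔽 k]` are (a.e.) `ℍ k`-measurable, then with `U₀ = E[Utilde|ℍ 0]` and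
`H^H_k = E[H^F_k|ℍ k]`, each `H^H_k ΔM_k` is square-integrable and
`ξ − U₀ − Σ H^H_k ΔM_k` is orthogonal in `L²` to every element of `L^H`. -/
theorem stmt_11 {Ω : Type*} {mΩ : MeasurableSpace Ω} {P : Measure Ω} [IsProbabilityMeasure P]
    (N : ℕ) (𝔽 ℍ : Filtration ℕ mΩ) (hle : ∀ k, ℍ k ≤ 𝔽 k)
    (M : ℕ → Ω → ℝ) (hM : Martingale M 𝔽 P) (hM2 : ∀ k, MemLp (M k) 2 P)
    (ξ : Ω → ℝ) (hξ : MemLp ξ 2 P)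
    (Utilde : Ω → ℝ) (HF : ℕ → Ω → ℝ) (OtildeN : Ω → ℝ)
    (hUtmeas : StronglyMeasurable[𝔽 0] Utilde) (hUt2 : MemLp Utilde 2 P)
    (hHFmeas : ∀ k, StronglyMeasurable[𝔽 k] (HF k))
    (hHF2 : ∀ k, MemLp (HF k) 2 P)
    (hHFM2 : ∀ k, MemLp (fun ω => HF k ω * (M (k + 1) ω - M k ω)) 2 P)
    (hOt2 : MemLp OtildeN 2 P)
    (hOtorth : ∀ (V₀ : Ω → ℝ) (φ : ℕ → Ω → ℝ), MemLp V₀ 2 P →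
      StronglyMeasurable[𝔽 0] V₀ →
      (∀ k, StronglyMeasurable[𝔽 k] (φ k)) →
      (∀ k, MemLp (fun ω => φ k ω * (M (k + 1) ω - M k ω)) 2 P) →
      ∫ ω, OtildeN ω * (V₀ ω + ∑ k ∈ Finset.range N, φ k ω * (M (k + 1) ω - M k ω)) ∂P = 0)
    (hdec : ξ =ᵐ[P] fun ω =>
      Utilde ω + (∑ k ∈ Finset.range N, HF k ω * (M (k + 1) ω - M k ω)) + OtildeN ω)
    (hw : ∀ k, ∃ w' : Ω → ℝ, StronglyMeasurable[ℍ k] w' ∧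
      P[fun ω => (M (k + 1) ω - M k ω) ^ 2 | 𝔽 k] =ᵐ[P] w') :
    (∀ k, MemLp (fun ω => (P[HF k | ℍ k]) ω * (M (k + 1) ω - M k ω)) 2 P) ∧
    (∀ (V₀ : Ω → ℝ) (φ : ℕ → Ω → ℝ), MemLp V₀ 2 P → StronglyMeasurable[ℍ 0] V₀ →
      (∀ k, StronglyMeasurable[ℍ k] (φ k)) →
      (∀ k, MemLp (fun ω => φ k ω * (M (k + 1) ω - M k ω)) 2 P) →
      ∫ ω, (ξ ω - (P[Utilde | ℍ 0]) ω
          - ∑ k ∈ Finset.range N, (P[HF k | ℍ k]) ω * (M (k + 1) ω - M k ω))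
        * (V₀ ω + ∑ k ∈ Finset.range N, φ k ω * (M (k + 1) ω - M k ω)) ∂P = 0) := by
  have hmF : ∀ k, 𝔽 k ≤ mΩ := fun k => 𝔽.le k
  have hmH : ∀ k, ℍ k ≤ mΩ := fun k => (hle k).trans (𝔽.le k)
  have hΔ2 : ∀ k, MemLp (fun ω => M (k + 1) ω - M k ω) 2 P := fun k => (hM2 (k + 1)).sub (hM2 k)
  have hΔint : ∀ k, Integrable (fun ω => M (k + 1) ω - M k ω) P :=
    fun k => (hΔ2 k).integrable one_le_two
  have hΔ0 : ∀ k, P[fun ω => M (k + 1) ω - M k ω|𝔽 k] =ᵐ[P] 0 := by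
    intro k
    have h1 : P[M (k + 1)|𝔽 k] =ᵐ[P] M k := hM.condExp_ae_eq (Nat.le_succ k)
    have h2 := condExp_sub (μ := P) (m := 𝔽 k) (hM.integrable (k + 1)) (hM.integrable k)
    have h3 : P[M k|𝔽 k] = M k :=
      condExp_of_stronglyMeasurable (hmF k) (hM.stronglyAdapted k) (hM.integrable k)
    filter_upwards [h1, h2] with ω e1 e2
    refine e2.trans ?_
    simp only [Pi.sub_apply, Pi.zero_apply, h3]
    rw [e1]
    simp
  have part1 : ∀ k, MemLp (fun ω => (P[HF k | ℍ k]) ω * (M (k + 1) ω - M k ω)) 2 P := by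
    intro k
    obtain ⟨w, hwm, hwae⟩ := hw k
    exact aux_part1 (hle k) (hmF k) (hHFmeas k) (hHF2 k) (hΔ2 k) (hHFM2 k) hwm hwae
  refine ⟨part1, ?_⟩
  intro V₀ φ hV2 hV0m hφm hφM2
  have hHH2 : ∀ k, MemLp (P[HF k|ℍ k]) 2 P := fun k => aux_memL2_condExp (hmH k) (hHF2 k)
  have hHHm : ∀ k, StronglyMeasurable[ℍ k] (P[HF k|ℍ k]) := fun k => stronglyMeasurable_condExp
  have hA2 : ∀ k, MemLp
      (fun ω => (HF k ω - (P[HF k|ℍ k]) ω) * (M (k + 1) ω - M k ω)) 2 P := by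
    intro k
    have h := (hHFM2 k).sub (part1 k)
    exact MemLp.ae_eq (Filter.Eventually.of_forall fun ω => by
      simp only [Pi.sub_apply]; ring) h
  have hU'2 : MemLp (fun ω => Utilde ω - (P[Utilde|ℍ 0]) ω) 2 P := by
    have h := hUt2.sub (aux_memL2_condExp (hmH 0) hUt2)
    exact MemLp.ae_eq (Filter.Eventually.of_forall fun ω => by
      simp only [Pi.sub_apply]) h
  have hT2 : MemLp
      (fun ω => V₀ ω + ∑ k ∈ Finset.range N, φ k ω * (M (k + 1) ω - M k ω)) 2 P := by
    have hs : MemLp (fun ω => ∑ k ∈ Finset.range N, φ k ω * (M (k + 1) ω - M k ω)) 2 P :=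
      memLp_finset_sum _ (fun k _ => hφM2 k)
    exact MemLp.ae_eq (Filter.Eventually.of_forall fun ω => by
      simp only [Pi.add_apply]) (hV2.add hs)
  have hSA2 : MemLp (fun ω => ∑ k ∈ Finset.range N,
      (HF k ω - (P[HF k|ℍ k]) ω) * (M (k + 1) ω - M k ω)) 2 P :=
    memLp_finset_sum _ (fun k _ => hA2 k)
  -- zero integral of U' against V₀
  have hzU : P[fun ω => Utilde ω - (P[Utilde|ℍ 0]) ω|ℍ 0] =ᵐ[P] 0 :=
    aux_condExp_diff_zero (hmH 0) (hUt2.integrable one_le_two)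
  have hUV : ∫ ω, (Utilde ω - (P[Utilde|ℍ 0]) ω) * V₀ ω ∂P = 0 := by
    rw [integral_congr_ae (Filter.Eventually.of_forall
      (fun ω => mul_comm (Utilde ω - (P[Utilde|ℍ 0]) ω) (V₀ ω)))]
    exact aux_pullout_zero (hmH 0) hV0m (hU'2.integrable one_le_two)
      (aux_int_mul_L2 hV2 hU'2) hzU
  -- zero integral of U' against φ j Δ j
  have hUφ : ∀ j, ∫ ω, (Utilde ω - (P[Utilde|ℍ 0]) ω) * (φ j ω * (M (j + 1) ω - M j ω)) ∂P
      = 0 := by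
    intro j
    rw [integral_congr_ae (Filter.Eventually.of_forall (fun ω => by
      show _ = ((Utilde ω - (P[Utilde|ℍ 0]) ω) * φ j ω) * (M (j + 1) ω - M j ω); ring))]
    refine aux_pullout_zero (hmF j) ?_ (hΔint j) ?_ (hΔ0 j)
    · exact ((hUtmeas.mono (𝔽.mono (Nat.zero_le j))).sub
        (stronglyMeasurable_condExp.mono ((hle 0).trans (𝔽.mono (Nat.zero_le j))))).mul
        ((hφm j).mono (hle j))
    · exact (aux_int_mul_L2 hU'2 (hφM2 j)).congr
        (Filter.Eventually.of_forall fun ω => by ring)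
  -- zero integral of A k against V₀
  have hAV : ∀ k, ∫ ω, ((HF k ω - (P[HF k|ℍ k]) ω) * (M (k + 1) ω - M k ω)) * V₀ ω ∂P
      = 0 := by
    intro k
    rw [integral_congr_ae (Filter.Eventually.of_forall (fun ω => by
      show _ = ((HF k ω - (P[HF k|ℍ k]) ω) * V₀ ω) * (M (k + 1) ω - M k ω); ring))]
    refine aux_pullout_zero (hmF k) ?_ (hΔint k) ?_ (hΔ0 k)
    · exact ((hHFmeas k).sub (stronglyMeasurable_condExp.mono (hle k))).mul
        (hV0m.mono ((ℍ.mono (Nat.zero_le k)).trans (hle k)))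
    · exact (aux_int_mul_L2 (hA2 k) hV2).congr
        (Filter.Eventually.of_forall fun ω => by ring)
  -- zero integral of A k against φ j Δ j
  have hAφ : ∀ k, ∀ j, ∫ ω, ((HF k ω - (P[HF k|ℍ k]) ω) * (M (k + 1) ω - M k ω))
      * (φ j ω * (M (j + 1) ω - M j ω)) ∂P = 0 := by
    intro k j
    rcases lt_trichotomy j k with hjk | hjk | hjk
    · -- j < k
      rw [integral_congr_ae (Filter.Eventually.of_forall (fun ω => by
        show _ = ((HF k ω - (P[HF k|ℍ k]) ω) * (φ j ω * (M (j + 1) ω - M j ω)))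
          * (M (k + 1) ω - M k ω); ring))]
      refine aux_pullout_zero (hmF k) ?_ (hΔint k) ?_ (hΔ0 k)
      · refine ((hHFmeas k).sub (stronglyMeasurable_condExp.mono (hle k))).mul
          (((hφm j).mono ((ℍ.mono hjk.le).trans (hle k))).mul ?_)
        exact ((hM.stronglyAdapted (j + 1)).mono (𝔽.mono hjk)).sub
          ((hM.stronglyAdapted j).mono (𝔽.mono hjk.le))
      · exact (aux_int_mul_L2 (hA2 k) (hφM2 j)).congr
          (Filter.Eventually.of_forall fun ω => by ring)
    · -- j = k : diagonal case
      subst hjk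
      obtain ⟨w, hwm, hwae⟩ := hw j
      have hD2int : Integrable (fun ω => (M (j + 1) ω - M j ω) ^ 2) P := (hΔ2 j).integrable_sq
      have htm : StronglyMeasurable[𝔽 j] (fun ω => (HF j ω - (P[HF j|ℍ j]) ω) * φ j ω) :=
        ((hHFmeas j).sub (stronglyMeasurable_condExp.mono (hle j))).mul
          ((hφm j).mono (hle j))
      have htd2int : Integrable
          (fun ω => ((HF j ω - (P[HF j|ℍ j]) ω) * φ j ω) * (M (j + 1) ω - M j ω) ^ 2) P :=
        (aux_int_mul_L2 (hA2 j) (hφM2 j)).congr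
          (Filter.Eventually.of_forall fun ω => by ring)
      have hpull := condExp_mul_of_stronglyMeasurable_left (m := 𝔽 j) htm
        (htd2int.congr (Filter.Eventually.of_forall fun ω => by simp only [Pi.mul_apply]))
        hD2int
      have hpull' : P[fun ω => ((HF j ω - (P[HF j|ℍ j]) ω) * φ j ω)
            * (M (j + 1) ω - M j ω) ^ 2|𝔽 j]
          =ᵐ[P] fun ω => ((HF j ω - (P[HF j|ℍ j]) ω) * φ j ω) * w ω := by
        have h0 : P[fun ω => ((HF j ω - (P[HF j|ℍ j]) ω) * φ j ω)
              * (M (j + 1) ω - M j ω) ^ 2|𝔽 j]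
            =ᵐ[P] (fun ω => (HF j ω - (P[HF j|ℍ j]) ω) * φ j ω)
              * P[fun ω => (M (j + 1) ω - M j ω) ^ 2|𝔽 j] := by
          refine Filter.EventuallyEq.trans ?_ hpull
          refine condExp_congr_ae (Filter.Eventually.of_forall fun ω => ?_)
          simp only [Pi.mul_apply]
        filter_upwards [h0, hwae] with ω e0 e2
        refine e0.trans ?_
        simp only [Pi.mul_apply]
        rw [e2]
      have htwint : Integrable
          (fun ω => ((HF j ω - (P[HF j|ℍ j]) ω) * φ j ω) * w ω) P :=
        integrable_condExp.congr hpull'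
      have hz : P[fun ω => HF j ω - (P[HF j|ℍ j]) ω|ℍ j] =ᵐ[P] 0 :=
        aux_condExp_diff_zero (hmH j) ((hHF2 j).integrable one_le_two)
      calc ∫ ω, ((HF j ω - (P[HF j|ℍ j]) ω) * (M (j + 1) ω - M j ω))
            * (φ j ω * (M (j + 1) ω - M j ω)) ∂P
          = ∫ ω, ((HF j ω - (P[HF j|ℍ j]) ω) * φ j ω) * (M (j + 1) ω - M j ω) ^ 2 ∂P :=
            integral_congr_ae (Filter.Eventually.of_forall fun ω => by ring)
        _ = ∫ ω, (P[fun ω => ((HF j ω - (P[HF j|ℍ j]) ω) * φ j ω)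
              * (M (j + 1) ω - M j ω) ^ 2|𝔽 j]) ω ∂P := (integral_condExp (hmF j)).symm
        _ = ∫ ω, ((HF j ω - (P[HF j|ℍ j]) ω) * φ j ω) * w ω ∂P := integral_congr_ae hpull'
        _ = ∫ ω, (φ j ω * w ω) * (HF j ω - (P[HF j|ℍ j]) ω) ∂P :=
            integral_congr_ae (Filter.Eventually.of_forall fun ω => by ring)
        _ = 0 := by
            refine aux_pullout_zero (hmH j) ((hφm j).mul hwm)
              (((hHF2 j).sub (hHH2 j)).integrable one_le_two |>.congr
                (Filter.Eventually.of_forall fun ω => by simp only [Pi.sub_apply]))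
              (htwint.congr (Filter.Eventually.of_forall fun ω => by ring)) hz
    · -- k < j
      rw [integral_congr_ae (Filter.Eventually.of_forall (fun ω => by
        show _ = (((HF k ω - (P[HF k|ℍ k]) ω) * (M (k + 1) ω - M k ω)) * φ j ω)
          * (M (j + 1) ω - M j ω); ring))]
      refine aux_pullout_zero (hmF j) ?_ (hΔint j) ?_ (hΔ0 j)
      · refine ((((hHFmeas k).mono (𝔽.mono hjk.le)).sub
          (stronglyMeasurable_condExp.mono ((hle k).trans (𝔽.mono hjk.le)))).mul
          (((hM.stronglyAdapted (k + 1)).mono (𝔽.mono hjk)).sub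
            ((hM.stronglyAdapted k).mono (𝔽.mono hjk.le)))).mul ((hφm j).mono (hle j))
      · exact (aux_int_mul_L2 (hA2 k) (hφM2 j)).congr
          (Filter.Eventually.of_forall fun ω => by ring)
  -- integrability of products with T
  have Int1 : Integrable (fun ω => (Utilde ω - (P[Utilde|ℍ 0]) ω)
      * (V₀ ω + ∑ k ∈ Finset.range N, φ k ω * (M (k + 1) ω - M k ω))) P :=
    aux_int_mul_L2 hU'2 hT2
  have Int2 : Integrable (fun ω => (∑ k ∈ Finset.range N,
      (HF k ω - (P[HF k|ℍ k]) ω) * (M (k + 1) ω - M k ω))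
      * (V₀ ω + ∑ k ∈ Finset.range N, φ k ω * (M (k + 1) ω - M k ω))) P :=
    aux_int_mul_L2 hSA2 hT2
  have Int3 : Integrable (fun ω => OtildeN ω
      * (V₀ ω + ∑ k ∈ Finset.range N, φ k ω * (M (k + 1) ω - M k ω))) P :=
    aux_int_mul_L2 hOt2 hT2
  -- expansion of a product integral against T
  have hexpand : ∀ (q : Ω → ℝ), MemLp q 2 P →
      ∫ ω, q ω * (V₀ ω + ∑ j ∈ Finset.range N, φ j ω * (M (j + 1) ω - M j ω)) ∂P
      = (∫ ω, q ω * V₀ ω ∂P)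
        + ∑ j ∈ Finset.range N, ∫ ω, q ω * (φ j ω * (M (j + 1) ω - M j ω)) ∂P := by
    intro q hq2
    have hint1 : Integrable (fun ω => q ω * V₀ ω) P := aux_int_mul_L2 hq2 hV2
    have hint2 : ∀ j, Integrable (fun ω => q ω * (φ j ω * (M (j + 1) ω - M j ω))) P :=
      fun j => aux_int_mul_L2 hq2 (hφM2 j)
    calc ∫ ω, q ω * (V₀ ω + ∑ j ∈ Finset.range N, φ j ω * (M (j + 1) ω - M j ω)) ∂P
        = ∫ ω, (q ω * V₀ ω
            + ∑ j ∈ Finset.range N, q ω * (φ j ω * (M (j + 1) ω - M j ω))) ∂P :=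
          integral_congr_ae (Filter.Eventually.of_forall fun ω => by
            beta_reduce; rw [mul_add, Finset.mul_sum])
      _ = (∫ ω, q ω * V₀ ω ∂P)
          + ∫ ω, ∑ j ∈ Finset.range N, q ω * (φ j ω * (M (j + 1) ω - M j ω)) ∂P :=
          integral_add hint1 (integrable_finset_sum _ fun j _ => hint2 j)
      _ = (∫ ω, q ω * V₀ ω ∂P)
          + ∑ j ∈ Finset.range N, ∫ ω, q ω * (φ j ω * (M (j + 1) ω - M j ω)) ∂P := by
          rw [integral_finset_sum _ fun j _ => hint2 j]
  -- main computation
  have hae : (fun ω => (ξ ω - (P[Utilde | ℍ 0]) ω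
        - ∑ k ∈ Finset.range N, (P[HF k | ℍ k]) ω * (M (k + 1) ω - M k ω))
      * (V₀ ω + ∑ k ∈ Finset.range N, φ k ω * (M (k + 1) ω - M k ω)))
      =ᵐ[P] fun ω => ((Utilde ω - (P[Utilde|ℍ 0]) ω)
        + (∑ k ∈ Finset.range N, (HF k ω - (P[HF k|ℍ k]) ω) * (M (k + 1) ω - M k ω))
        + OtildeN ω)
      * (V₀ ω + ∑ k ∈ Finset.range N, φ k ω * (M (k + 1) ω - M k ω)) := by
    filter_upwards [hdec] with ω h
    have hSS : ∑ k ∈ Finset.range N, (HF k ω - (P[HF k|ℍ k]) ω) * (M (k + 1) ω - M k ω)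
        = (∑ k ∈ Finset.range N, HF k ω * (M (k + 1) ω - M k ω))
          - ∑ k ∈ Finset.range N, (P[HF k|ℍ k]) ω * (M (k + 1) ω - M k ω) := by
      rw [← Finset.sum_sub_distrib]
      exact Finset.sum_congr rfl fun k _ => by ring
    rw [h, hSS]
    ring
  rw [integral_congr_ae hae]
  calc ∫ ω, ((Utilde ω - (P[Utilde|ℍ 0]) ω)
        + (∑ k ∈ Finset.range N, (HF k ω - (P[HF k|ℍ k]) ω) * (M (k + 1) ω - M k ω))
        + OtildeN ω)
      * (V₀ ω + ∑ k ∈ Finset.range N, φ k ω * (M (k + 1) ω - M k ω)) ∂P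
      = ∫ ω, ((Utilde ω - (P[Utilde|ℍ 0]) ω)
          * (V₀ ω + ∑ k ∈ Finset.range N, φ k ω * (M (k + 1) ω - M k ω))
        + ((∑ k ∈ Finset.range N, (HF k ω - (P[HF k|ℍ k]) ω) * (M (k + 1) ω - M k ω))
            * (V₀ ω + ∑ k ∈ Finset.range N, φ k ω * (M (k + 1) ω - M k ω))
          + OtildeN ω
            * (V₀ ω + ∑ k ∈ Finset.range N, φ k ω * (M (k + 1) ω - M k ω)))) ∂P :=
        integral_congr_ae (Filter.Eventually.of_forall fun ω => by ring)
    _ = (∫ ω, (Utilde ω - (P[Utilde|ℍ 0]) ω)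
          * (V₀ ω + ∑ k ∈ Finset.range N, φ k ω * (M (k + 1) ω - M k ω)) ∂P)
        + ∫ ω, ((∑ k ∈ Finset.range N, (HF k ω - (P[HF k|ℍ k]) ω) * (M (k + 1) ω - M k ω))
            * (V₀ ω + ∑ k ∈ Finset.range N, φ k ω * (M (k + 1) ω - M k ω))
          + OtildeN ω
            * (V₀ ω + ∑ k ∈ Finset.range N, φ k ω * (M (k + 1) ω - M k ω))) ∂P :=
        integral_add Int1 (Int2.add Int3)
    _ = (∫ ω, (Utilde ω - (P[Utilde|ℍ 0]) ω)
          * (V₀ ω + ∑ k ∈ Finset.range N, φ k ω * (M (k + 1) ω - M k ω)) ∂P)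
        + ((∫ ω, (∑ k ∈ Finset.range N,
              (HF k ω - (P[HF k|ℍ k]) ω) * (M (k + 1) ω - M k ω))
            * (V₀ ω + ∑ k ∈ Finset.range N, φ k ω * (M (k + 1) ω - M k ω)) ∂P)
          + ∫ ω, OtildeN ω
            * (V₀ ω + ∑ k ∈ Finset.range N, φ k ω * (M (k + 1) ω - M k ω)) ∂P) := by
        rw [integral_add Int2 Int3]
    _ = 0 := by
        have hOterm : ∫ ω, OtildeN ω
            * (V₀ ω + ∑ k ∈ Finset.range N, φ k ω * (M (k + 1) ω - M k ω)) ∂P = 0 :=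
          hOtorth V₀ φ hV2 (hV0m.mono (hle 0)) (fun k => (hφm k).mono (hle k)) hφM2
        have hUterm : ∫ ω, (Utilde ω - (P[Utilde|ℍ 0]) ω)
            * (V₀ ω + ∑ k ∈ Finset.range N, φ k ω * (M (k + 1) ω - M k ω)) ∂P = 0 := by
          rw [hexpand _ hU'2, hUV]
          rw [Finset.sum_congr rfl fun j _ => hUφ j]
          simp
        have hAterm : ∫ ω, (∑ k ∈ Finset.range N,
              (HF k ω - (P[HF k|ℍ k]) ω) * (M (k + 1) ω - M k ω))
            * (V₀ ω + ∑ k ∈ Finset.range N, φ k ω * (M (k + 1) ω - M k ω)) ∂P = 0 := by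
          have hsum : ∫ ω, (∑ k ∈ Finset.range N,
                (HF k ω - (P[HF k|ℍ k]) ω) * (M (k + 1) ω - M k ω))
              * (V₀ ω + ∑ k ∈ Finset.range N, φ k ω * (M (k + 1) ω - M k ω)) ∂P
              = ∑ k ∈ Finset.range N, ∫ ω,
                ((HF k ω - (P[HF k|ℍ k]) ω) * (M (k + 1) ω - M k ω))
                * (V₀ ω + ∑ j ∈ Finset.range N, φ j ω * (M (j + 1) ω - M j ω)) ∂P := by
            rw [integral_congr_ae (Filter.Eventually.of_forall (fun ω => by
              beta_reduce; rw [Finset.sum_mul]))]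
            exact integral_finset_sum _ fun k _ => aux_int_mul_L2 (hA2 k) hT2
          rw [hsum]
          refine Finset.sum_eq_zero fun k _ => ?_
          rw [hexpand _ (hA2 k), hAV k]
          rw [Finset.sum_congr rfl fun j _ => hAφ k j]
          simp
        rw [hOterm, hUterm, hAterm]
        ring
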